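/- A separable functor between abelian categories that preserves monomorphisms reflects injective objects: if F : C → D is separable and a monofunctor, and F(Q) is injective in D, then Q is injective in C. Dually, a separable epifunctor reflects projective objects. -/
import Mathlib


open CategoryTheory

universe v₁ v₂ u₁ u₂

/-- A functor `F : C ⥤ D` is *separable* if for all objects `X, Y` there are
maps `Φ : Hom_D(F X, F Y) → Hom_C(X, Y)` such that (SF1) `Φ (F.map f) = f` for
every morphism `f`, and (SF2) for every commutative square
`h ≫ F.map g = F.map f ≫ h'` in `D` one has `Φ h ≫ g = f ≫ Φ h'`. -/
def CategoryTheory.Functor.Separable {C : Type u₁} {D : Type u₂}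
    [Category.{v₁} C] [Category.{v₂} D] (F : C ⥤ D) : Prop :=
  ∃ Φ : ∀ ⦃X Y : C⦄, (F.obj X ⟶ F.obj Y) → (X ⟶ Y),
    (∀ ⦃X Y : C⦄ (f : X ⟶ Y), Φ (F.map f) = f) ∧
    (∀ ⦃X₁ X₁' X₂ X₂' : C⦄ (f : X₁ ⟶ X₁') (g : X₂ ⟶ X₂')
      (h : F.obj X₁ ⟶ F.obj X₂) (h' : F.obj X₁' ⟶ F.obj X₂'),
      h ≫ F.map g = F.map f ≫ h' → Φ h ≫ g = f ≫ Φ h')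

/-- A separable functor between abelian categories which preserves
monomorphisms reflects injective objects; dually, a separable functor which
preserves epimorphisms reflects projective objects. -/
theorem separable_functor_reflects_injectives_and_projectives
    {C : Type u₁} {D : Type u₂} [Category.{v₁} C] [Category.{v₂} D]
    [Abelian C] [Abelian D] (F : C ⥤ D) (hF : F.Separable) :
    (∀ Q : C, F.PreservesMonomorphisms → Injective (F.obj Q) → Injective Q) ∧
    (∀ Q : C, F.PreservesEpimorphisms → Projective (F.obj Q) → Projective Q) := by
  obtain ⟨Φ, hΦ1, hΦ2⟩ := hF
  constructor
  · intro Q hmono hinj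
    constructor
    intro X Y g f hf
    haveI : Mono (F.map f) := hmono.preserves f
    obtain ⟨h, hh⟩ := hinj.factors (F.map g) (F.map f)
    refine ⟨Φ h, ?_⟩
    have := hΦ2 f (𝟙 Q) (F.map g) h (by simpa using hh.symm)
    simpa [hΦ1] using this.symm
  · intro Q hepi hproj
    constructor
    intro E X f e he
    haveI : Epi (F.map e) := hepi.preserves e
    obtain ⟨h, hh⟩ := hproj.factors (F.map f) (F.map e)
    refine ⟨Φ h, ?_⟩
    have := hΦ2 (𝟙 Q) e h (F.map f) (by simpa using hh)
    simpa [hΦ1] using this
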